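/- Theorem 1(4), tangency part: Let Z = (0, c²/(2y_A)) and V = (1, b²/(2y_A)). For all p, l > 0 with p ≠ l, the gradient of F⁻_{p,l} at Z is a nonzero scalar multiple of the vector (x_A, y_A) = A − B, and the gradient of F⁻_{p,l} at V is a nonzero scalar multiple of (x_A − 1, y_A) = A − C; the same holds for F⁺_{p,l}. Consequently the tangent line to each of these conics at Z is the perpendicular bisector of AB, and at V it is the perpendicular bisector of AC. -/

import Mathlib

/-- The conic `F⁻_{p,l}(x,y) = 0` from the paper (with `c = |AB|`). -/
noncomputable def Fminus (xA yA c p l x y : ℝ) : ℝ :=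
  4*y^2*yA^2*(p-l)^2 + x*y*yA*(p-l)^2*(8*xA-4)
    + x^2*((p-l)^2*(2*xA-1)^2 - (p+l)^2)
    - 2*y*yA*(2*c^2*(p-l)^2 - (p+l)^2)
    + x*(-(2*c^2*(p-l)^2*(2*xA-1)) + 2*xA*(p+l)^2)
    + c^2*(c^2*(p-l)^2 - (p+l)^2)

/-- The conic `F⁺_{p,l}(x,y) = 0`: the formula of `F⁻` with the roles of `(p-l)` and
`(p+l)` interchanged. -/
noncomputable def Fplus (xA yA c p l x y : ℝ) : ℝ :=
  4*y^2*yA^2*(p+l)^2 + x*y*yA*(p+l)^2*(8*xA-4)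
    + x^2*((p+l)^2*(2*xA-1)^2 - (p-l)^2)
    - 2*y*yA*(2*c^2*(p+l)^2 - (p-l)^2)
    + x*(-(2*c^2*(p+l)^2*(2*xA-1)) + 2*xA*(p-l)^2)
    + c^2*(c^2*(p+l)^2 - (p-l)^2)

/-- The gradient (vector of partial derivatives) of a function `F : ℝ → ℝ → ℝ` at a
point `P` of the plane. -/
noncomputable def gradAt (F : ℝ → ℝ → ℝ) (P : ℝ × ℝ) : ℝ × ℝ :=
  (deriv (fun x => F x P.2) P.1, deriv (fun y => F P.1 y) P.2)

lemma quad_deriv (a b k t : ℝ) : deriv (fun x => a*x^2 + b*x + k) t = 2*a*t + b := by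
  have h : HasDerivAt (fun x => a*x^2 + b*x + k) (2*a*t + b) t := by
    have h1 := (((hasDerivAt_pow 2 t).const_mul a).add
      (((hasDerivAt_id t).const_mul b).add_const k))
    have e1 : (fun x => a*x^2 + b*x + k) = (fun y => a * y ^ 2) + fun x => b * id x + k := by
      funext x; simp only [Pi.add_apply, id]; ring
    have e2 : (2*a*t + b) = a * (((2:ℕ):ℝ) * t ^ (2 - 1)) + b * 1 := by
      norm_num; ring
    rw [e1, e2]; exact h1
  exact h.deriv

/-- Gradient of a general quadratic. -/
lemma grad_quad (A B C D E K x0 y0 : ℝ) :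
    gradAt (fun x y => A*y^2 + B*x*y + C*x^2 + D*y + E*x + K) (x0, y0)
      = (2*C*x0 + (B*y0 + E), 2*A*y0 + (B*x0 + D)) := by
  unfold gradAt
  have hx : (fun x => A*y0^2 + B*x*y0 + C*x^2 + D*y0 + E*x + K)
      = fun x => C*x^2 + (B*y0+E)*x + (A*y0^2 + D*y0 + K) := by
    funext x; ring
  have hy : (fun y => A*y^2 + B*x0*y + C*x0^2 + D*y + E*x0 + K)
      = fun y => A*y^2 + (B*x0+D)*y + (C*x0^2 + E*x0 + K) := by
    funext y; ring
  simp only [hx, hy, quad_deriv]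

lemma Fminus_eq (xA yA c p l : ℝ) :
    (fun x y => Fminus xA yA c p l x y)
      = fun x y => (4*yA^2*(p-l)^2)*y^2 + (yA*(p-l)^2*(8*xA-4))*x*y
          + ((p-l)^2*(2*xA-1)^2 - (p+l)^2)*x^2
          + (-(2*yA*(2*c^2*(p-l)^2 - (p+l)^2)))*y
          + (-(2*c^2*(p-l)^2*(2*xA-1)) + 2*xA*(p+l)^2)*x
          + c^2*(c^2*(p-l)^2 - (p+l)^2) := by
  funext x y; unfold Fminus; ring

lemma Fplus_eq (xA yA c p l : ℝ) :
    (fun x y => Fplus xA yA c p l x y)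
      = fun x y => (4*yA^2*(p+l)^2)*y^2 + (yA*(p+l)^2*(8*xA-4))*x*y
          + ((p+l)^2*(2*xA-1)^2 - (p-l)^2)*x^2
          + (-(2*yA*(2*c^2*(p+l)^2 - (p-l)^2)))*y
          + (-(2*c^2*(p+l)^2*(2*xA-1)) + 2*xA*(p-l)^2)*x
          + c^2*(c^2*(p+l)^2 - (p-l)^2) := by
  funext x y; unfold Fplus; ring

theorem statement4 (xA yA : ℝ) (hyA : yA ≠ 0)
    (b c : ℝ) (hb : b = Real.sqrt ((xA - 1)^2 + yA^2))
    (hc : c = Real.sqrt (xA^2 + yA^2)) (hbc : b ≠ c)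
    (Z V : ℝ × ℝ) (hZ : Z = (0, c^2 / (2*yA))) (hV : V = (1, b^2 / (2*yA)))
    (p l : ℝ) (hp : 0 < p) (hl : 0 < l) (hpl : p ≠ l) :
    (∃ s : ℝ, s ≠ 0 ∧ gradAt (fun x y => Fminus xA yA c p l x y) Z = s • ((xA, yA) : ℝ × ℝ)) ∧
    (∃ s : ℝ, s ≠ 0 ∧ gradAt (fun x y => Fminus xA yA c p l x y) V = s • ((xA - 1, yA) : ℝ × ℝ)) ∧
    (∃ s : ℝ, s ≠ 0 ∧ gradAt (fun x y => Fplus xA yA c p l x y) Z = s • ((xA, yA) : ℝ × ℝ)) ∧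
    (∃ s : ℝ, s ≠ 0 ∧ gradAt (fun x y => Fplus xA yA c p l x y) V = s • ((xA - 1, yA) : ℝ × ℝ)) := by
  have hc2 : c^2 = xA^2 + yA^2 := by
    rw [hc, Real.sq_sqrt (by positivity)]
  have hb2 : b^2 = (xA-1)^2 + yA^2 := by
    rw [hb, Real.sq_sqrt (by positivity)]
  have hr : (p + l) ≠ 0 := by positivity
  have hq : (p - l) ≠ 0 := sub_ne_zero.mpr hpl
  subst hZ hV
  refine ⟨⟨2*(p+l)^2, by positivity, ?_⟩, ⟨2*(p+l)^2, by positivity, ?_⟩,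
    ⟨2*(p-l)^2, by positivity, ?_⟩, ⟨2*(p-l)^2, by positivity, ?_⟩⟩ <;>
    simp only [Fminus_eq, Fplus_eq, grad_quad, Prod.smul_mk, smul_eq_mul, Prod.mk.injEq] <;>
    constructor <;> field_simp <;> simp only [hb2, hc2] <;> ring
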